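/- Assume the feasible set {x ∈ ℝⁿ : ‖Ax − b‖ ≤ δ} is nonempty, and let r = min { ‖x‖₀ : ‖Ax − b‖ ≤ δ } > 0 and α > 0 be such that |x|ᵣ↓ > α for all feasible x. Then for every ρ > 1/α, every globally optimal solution (x̄, v̄) of the penalty problem min { ⟨e, e − v⟩ + ρ⟨v, |x|⟩ : ‖Ax − b‖ ≤ δ, 0 ≤ v ≤ e } satisfies ‖x̄‖₀ = r and v̄ = e − sign(|x̄|). -/

import Mathlib

/-- The Euclidean norm of a vector in `ℝᵐ`. -/
noncomputable def enorm {m : ℕ} (u : Fin m → ℝ) : ℝ := Real.sqrt (∑ i, u i ^ 2)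

/-- The zero-norm (number of nonzero components) of `x ∈ ℝⁿ`. -/
noncomputable def zeroNorm {n : ℕ} (x : Fin n → ℝ) : ℕ :=
  (Finset.univ.filter fun i => x i ≠ 0).card

/-- let `r = min { ‖x‖₀ : ‖Ax − b‖ ≤ δ } > 0` and `α > 0` be such that the
`r`-th largest component of `|x|` exceeds `α` for all feasible `x` (i.e. every feasible `x`
has at least `r` components with `|xᵢ| > α`). Then for every `ρ > 1/α`, every globally
optimal solution `(x̄, v̄)` of the penalty problem satisfies `‖x̄‖₀ = r` and
`v̄ = e − sign(|x̄|)`. -/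
theorem penalty_global_opt_solves_l0 {m n : ℕ} (A : Matrix (Fin m) (Fin n) ℝ)
    (b : Fin m → ℝ) (δ : ℝ) (hδ : 0 ≤ δ)
    (hne : ∃ x : Fin n → ℝ, _root_.enorm (A.mulVec x - b) ≤ δ)
    (r : ℕ) (hrpos : 0 < r)
    (hr : IsLeast {k : ℕ | ∃ x : Fin n → ℝ, _root_.enorm (A.mulVec x - b) ≤ δ ∧ zeroNorm x = k} r)
    (α : ℝ) (hα : 0 < α)
    (hαr : ∀ x : Fin n → ℝ, _root_.enorm (A.mulVec x - b) ≤ δ →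
      r ≤ (Finset.univ.filter fun i => α < |x i|).card)
    (ρ : ℝ) (hρ : 1 / α < ρ) :
    ∀ xb vb : Fin n → ℝ,
      _root_.enorm (A.mulVec xb - b) ≤ δ → (∀ i, 0 ≤ vb i ∧ vb i ≤ 1) →
      (∀ x v : Fin n → ℝ, _root_.enorm (A.mulVec x - b) ≤ δ → (∀ i, 0 ≤ v i ∧ v i ≤ 1) →
        (∑ i, (1 - vb i)) + ρ * ∑ i, vb i * |xb i| ≤
          (∑ i, (1 - v i)) + ρ * ∑ i, v i * |x i|) →
      zeroNorm xb = r ∧ vb = fun i => if xb i = 0 then 1 else 0 := by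
  intro xb vb hxb hvb hopt
  classical
  have hρ0 : 0 < ρ := lt_trans (by positivity) hρ
  have hρα : 1 < ρ * α := by
    have := (div_lt_iff₀ hα).mp hρ
    linarith
  -- the witness of the minimum
  obtain ⟨xs, hxs, hxsr⟩ := hr.1
  set vs : Fin n → ℝ := fun i => if xs i = 0 then 1 else 0 with hvs
  have hvsb : ∀ i, 0 ≤ vs i ∧ vs i ≤ 1 := by
    intro i; simp only [hvs]; split <;> norm_num
  have hsum1 : (∑ i, (1 - vs i)) = (r : ℝ) := by
    have : (∑ i, (1 - vs i)) = ∑ i, (if xs i ≠ 0 then (1 : ℝ) else 0) := by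
      apply Finset.sum_congr rfl
      intro i _
      by_cases h : xs i = 0 <;> simp [hvs, h]
    rw [this, Finset.sum_boole]
    rw [← hxsr]; rfl
  have hsum2 : (∑ i, vs i * |xs i|) = 0 := by
    apply Finset.sum_eq_zero
    intro i _
    by_cases h : xs i = 0 <;> simp [hvs, h]
  have hupper : (∑ i, (1 - vb i)) + ρ * ∑ i, vb i * |xb i| ≤ (r : ℝ) := by
    have := hopt xs vs hxs hvsb
    rw [hsum1, hsum2] at this
    linarith
  set t : Fin n → ℝ := fun i => (1 - vb i) + ρ * (vb i * |xb i|) with ht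
  have hFt : (∑ i, (1 - vb i)) + ρ * ∑ i, vb i * |xb i| = ∑ i, t i := by
    rw [Finset.mul_sum, ← Finset.sum_add_distrib]
  rw [hFt] at hupper
  set S : Finset (Fin n) := Finset.univ.filter fun i => α < |xb i| with hS
  have hrS : r ≤ S.card := hαr xb hxb
  have h0 : ∀ i, 0 ≤ t i := by
    intro i
    have h1 := (hvb i).1
    have h2 := (hvb i).2
    have h3 : 0 ≤ |xb i| := abs_nonneg _
    have : 0 ≤ ρ * (vb i * |xb i|) := by positivity
    simp only [ht]; linarith
  have h1S : ∀ i ∈ S, 1 ≤ t i := by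
    intro i hi
    have hαi : α < |xb i| := by
      simpa [hS] using hi
    have h1 := (hvb i).1
    have h2 := (hvb i).2
    have hρx : 1 < ρ * |xb i| := lt_of_lt_of_le hρα (by nlinarith)
    simp only [ht]
    nlinarith
  have hlow : (S.card : ℝ) ≤ ∑ i, t i := by
    calc (S.card : ℝ) = ∑ _i ∈ S, (1 : ℝ) := by simp
    _ ≤ ∑ i ∈ S, t i := Finset.sum_le_sum h1S
    _ ≤ ∑ i, t i := Finset.sum_le_sum_of_subset_of_nonneg (Finset.subset_univ S)
        (fun i _ _ => h0 i)
  have hScard : S.card = r := by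
    have : (S.card : ℝ) ≤ (r : ℝ) := le_trans hlow hupper
    have hle : S.card ≤ r := by exact_mod_cast this
    omega
  have hsum_eq : ∑ i, t i = (r : ℝ) := by
    apply le_antisymm hupper
    rw [← hScard]; exact hlow
  set g : Fin n → ℝ := fun i => if i ∈ S then t i - 1 else t i with hg
  have hg0 : ∀ i ∈ Finset.univ, 0 ≤ g i := by
    intro i _
    simp only [hg]
    split
    · linarith [h1S i (by assumption)]
    · exact h0 i
  have hgsum : ∑ i, g i = 0 := by
    have : ∑ i, g i = (∑ i, t i) - ∑ i, (if i ∈ S then (1 : ℝ) else 0) := by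
      rw [← Finset.sum_sub_distrib]
      apply Finset.sum_congr rfl
      intro i _
      simp only [hg]; split <;> simp
    rw [this, Finset.sum_boole, hsum_eq]
    simp only [Finset.filter_mem_eq_inter, Finset.univ_inter] at *
    rw [hScard]; ring
  have hgz : ∀ i, g i = 0 := by
    intro i
    have := (Finset.sum_eq_zero_iff_of_nonneg hg0).mp hgsum
    exact this i (Finset.mem_univ i)
  -- now extract pointwise facts
  have hin : ∀ i ∈ S, vb i = 0 ∧ xb i ≠ 0 := by
    intro i hi
    have hαi : α < |xb i| := by simpa [hS] using hi
    have hgi := hgz i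
    simp only [hg, if_pos hi, ht] at hgi
    have hρx : 1 < ρ * |xb i| := lt_of_lt_of_le hρα (by nlinarith)
    have hmul : vb i * (ρ * |xb i| - 1) = 0 := by ring_nf; ring_nf at hgi; linarith
    have hvb0 : vb i = 0 := by
      rcases mul_eq_zero.mp hmul with h | h
      · exact h
      · linarith
    refine ⟨hvb0, ?_⟩
    intro h
    rw [h] at hαi; simp at hαi; linarith
  have hout : ∀ i, i ∉ S → xb i = 0 ∧ vb i = 1 := by
    intro i hi
    have hgi := hgz i
    simp only [hg, if_neg hi, ht] at hgi
    have h1 := (hvb i).1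
    have h2 := (hvb i).2
    have h3 : 0 ≤ |xb i| := abs_nonneg _
    have h4 : 0 ≤ ρ * (vb i * |xb i|) := by positivity
    have hvb1 : vb i = 1 := by linarith
    have h5 : ρ * (vb i * |xb i|) = 0 := by linarith
    rw [hvb1, one_mul] at h5
    have : |xb i| = 0 := by
      rcases mul_eq_zero.mp h5 with h | h
      · linarith
      · exact h
    exact ⟨abs_eq_zero.mp this, hvb1⟩
  constructor
  · have hfe : (Finset.univ.filter fun i => xb i ≠ 0) = S := by
      ext i
      simp only [Finset.mem_filter, Finset.mem_univ, true_and]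
      constructor
      · intro h
        by_contra hc
        exact h (hout i hc).1
      · intro h
        exact (hin i h).2
    unfold zeroNorm
    rw [hfe, hScard]
  · funext i
    by_cases h : i ∈ S
    · obtain ⟨hv, hx⟩ := hin i h
      rw [if_neg hx]; exact hv
    · obtain ⟨hx, hv⟩ := hout i h
      rw [if_pos hx]; exact hv
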